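/- arXiv:1802.06023 — 5 statements merged into one kernel-verified Lean document; each statement's English description precedes it below -/
import Mathlib

section
/- Let R be a connected graded k-algebra with augmentation ideal m = R_{\ge 1}, and let S be a finite-dimensional simple left R-module with mS \ne 0. If n \ge 1 is such that R_1 S + R_2 S + \cdots + R_n S = S, then for every i \ge 0 one has R_{i+1} S + R_{i+2} S + \cdots + R_{i+n} S = S. -/
/-- The `k`-subspace `R_d · S` of `S` spanned by products of degree-`d` elements of `R`
with elements of `S`. -/
def pieceSmul {k R : Type} [Field k] [Ring R] [Algebra k R]
    (𝒜 : ℕ → Submodule k R) (S : Type) [AddCommGroup S] [Module R S] [Module k S]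
    (d : ℕ) : Submodule k S :=
  Submodule.span k {x : S | ∃ a ∈ 𝒜 d, ∃ s : S, x = a • s}

lemma pieceSmul_le_aux {k R S : Type} [Field k] [Ring R] [Algebra k R]
    (𝒜 : ℕ → Submodule k R) [GradedAlgebra 𝒜]
    [AddCommGroup S] [Module R S] [Module k S] [IsScalarTower k R S]
    (d n : ℕ)
    (hgen : (⨆ j ∈ Finset.Icc 1 n, pieceSmul 𝒜 S j) = (⊤ : Submodule k S)) :
    pieceSmul 𝒜 S d ≤ ⨆ j ∈ Finset.Icc 1 n, pieceSmul 𝒜 S (d + j) := by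
  rw [pieceSmul, Submodule.span_le]
  rintro x ⟨a, ha, s, rfl⟩
  let f : S →ₗ[k] S :=
    { toFun := fun t => a • t
      map_add' := fun t u => smul_add a t u
      map_smul' := by
        intro c t
        simp only [RingHom.id_apply]
        rw [← algebraMap_smul R c t, ← algebraMap_smul R c (a • t), smul_smul, smul_smul,
          Algebra.commutes] }
  have key : ∀ l ∈ Finset.Icc 1 n, Submodule.map f (pieceSmul 𝒜 S l) ≤ pieceSmul 𝒜 S (d + l) := by
    intro l _
    rw [pieceSmul, Submodule.map_span, Submodule.span_le]
    rintro _ ⟨_, ⟨b, hb, t, rfl⟩, rfl⟩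
    refine Submodule.subset_span ⟨a * b, SetLike.mul_mem_graded ha hb, t, ?_⟩
    show a • (b • t) = (a * b) • t
    rw [mul_smul]
  have hmem : a • s ∈ Submodule.map f (⊤ : Submodule k S) := ⟨s, trivial, rfl⟩
  rw [← hgen] at hmem
  simp only [Submodule.map_iSup] at hmem
  exact iSup₂_mono key hmem

/-- over a connected graded `k`-algebra `R`, if `S` is a finite-dimensional
simple left `R`-module with `mS ≠ 0` and `R_1 S + ⋯ + R_n S = S` for some `n ≥ 1`, then
`R_{i+1} S + ⋯ + R_{i+n} S = S` for every `i ≥ 0`. -/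
theorem stmt0 {k R S : Type} [Field k] [Ring R] [Algebra k R]
    (𝒜 : ℕ → Submodule k R) [GradedAlgebra 𝒜]
    (hconn : 𝒜 0 = (1 : Submodule k R))
    [AddCommGroup S] [Module R S] [Module k S] [IsScalarTower k R S]
    [IsSimpleModule R S] [FiniteDimensional k S]
    (hnt : ∃ (i : ℕ) (a : R), 0 < i ∧ a ∈ 𝒜 i ∧ ∃ x : S, a • x ≠ 0)
    (n : ℕ) (hn : 1 ≤ n)
    (hgen : (⨆ j ∈ Finset.Icc 1 n, pieceSmul 𝒜 S j) = (⊤ : Submodule k S)) :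
    ∀ i : ℕ, (⨆ j ∈ Finset.Icc (i + 1) (i + n), pieceSmul 𝒜 S j) = (⊤ : Submodule k S) := by
  intro i
  induction i with
  | zero => simpa using hgen
  | succ i ih =>
    apply top_unique
    rw [← ih]
    refine iSup₂_le fun j hj => ?_
    simp only [Finset.mem_Icc] at hj
    rcases eq_or_lt_of_le hj.1 with h | h
    · -- j = i + 1
      subst h
      refine (pieceSmul_le_aux 𝒜 (i + 1) n hgen).trans ?_
      refine iSup₂_le fun l hl => ?_
      simp only [Finset.mem_Icc] at hl
      refine le_iSup_of_le (i + 1 + l) (le_iSup_of_le ?_ le_rfl)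
      simp only [Finset.mem_Icc]; omega
    · -- i + 2 ≤ j ≤ i + n
      refine le_iSup_of_le j (le_iSup_of_le ?_ le_rfl)
      simp only [Finset.mem_Icc]; omega
end

section
/- Let R be a connected graded k-algebra, S a non-trivial finite-dimensional simple left R-module, and \pi : S~ \to S the map \pi(s \otimes t^j) = s. Then \pi is an R-module homomorphism with the universal property: for every graded left R-module M with M_{<0} = 0 and every R-module homomorphism \psi : M \to S, there exists a unique degree-zero graded homomorphism \tilde\psi : M \to S~ with \psi = \pi \circ \tilde\psi. -/
private noncomputable def gradedLift {k V W : Type} [Field k] [AddCommGroup V] [Module k V]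
    [AddCommGroup W] [Module k W] (A : ℕ → Submodule k V)
    (h : DirectSum.IsInternal A) (f : ∀ j : ℕ, A j →ₗ[k] W) : V →ₗ[k] W :=
  (DirectSum.toModule k ℕ W f).comp
    (LinearEquiv.ofBijective (DirectSum.coeLinearMap A) h).symm.toLinearMap

private lemma gradedLift_apply {k V W : Type} [Field k] [AddCommGroup V] [Module k V]
    [AddCommGroup W] [Module k W] (A : ℕ → Submodule k V)
    (h : DirectSum.IsInternal A) (f : ∀ j : ℕ, A j →ₗ[k] W) (j : ℕ) (x : V) (hx : x ∈ A j) :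
    gradedLift A h f x = f j ⟨x, hx⟩ := by
  have he : (LinearEquiv.ofBijective (DirectSum.coeLinearMap A) h).symm x
      = DirectSum.lof k ℕ (fun j => A j) j ⟨x, hx⟩ := by
    rw [LinearEquiv.symm_apply_eq, DirectSum.lof_eq_of]
    exact (DirectSum.coeLinearMap_of A j ⟨x, hx⟩).symm
  simp [gradedLift, he, DirectSum.toModule_lof]

private lemma toRLinear {k R V W : Type} [Field k] [Ring R] [Algebra k R]
    (𝒜 : ℕ → Submodule k R) [GradedAlgebra 𝒜]
    [AddCommGroup V] [Module R V] [Module k V] [IsScalarTower k R V]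
    [AddCommGroup W] [Module R W] [Module k W] [IsScalarTower k R W]
    (A : ℕ → Submodule k V) (htop : iSup A = ⊤)
    (f : V →ₗ[k] W)
    (hf : ∀ (i : ℕ) (a : R), a ∈ 𝒜 i → ∀ (j : ℕ), ∀ x ∈ A j, f (a • x) = a • f x) :
    ∀ (a : R) (t : V), f (a • t) = a • f t := by
  intro a t
  refine DirectSum.Decomposition.inductionOn 𝒜 (motive := fun a : R => f (a • t) = a • f t)
    ?_ ?_ ?_ a
  · simp
  · intro i m
    have ht : t ∈ ⨆ j, A j := htop ▸ Submodule.mem_top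
    refine Submodule.iSup_induction A (motive := fun t : V => f ((m : R) • t) = (m : R) • f t)
      ht ?_ ?_ ?_
    · intro j x hx
      exact hf i (m : R) m.2 j x hx
    · simp
    · intro x y hx hy
      simp [smul_add, hx, hy]
  · intro b c hb hc
    simp [add_smul, hb, hc]

/-- for the graded lift `S~` of a non-trivial finite-dimensional simple module
`S` (modelled by `T` with embeddings `ι j : S → T` as in the paper), the map
`π(s ⊗ t^j) = s` is an `R`-module homomorphism `T → S` satisfying the universal property:
for every graded left `R`-module `M` with `M_{<0} = 0` and every `R`-module map
`ψ : M → S` there is a unique degree-zero graded homomorphism `ψ' : M → T` with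
`ψ = π ∘ ψ'`. -/
theorem stmt2 {k R S T : Type} [Field k] [Ring R] [Algebra k R]
    (𝒜 : ℕ → Submodule k R) [GradedAlgebra 𝒜]
    (hconn : 𝒜 0 = (1 : Submodule k R))
    [AddCommGroup S] [Module R S] [Module k S] [IsScalarTower k R S]
    [IsSimpleModule R S] [FiniteDimensional k S]
    (hnt : ∃ (i : ℕ) (a : R), 0 < i ∧ a ∈ 𝒜 i ∧ ∃ x : S, a • x ≠ 0)
    [AddCommGroup T] [Module R T] [Module k T] [IsScalarTower k R T]
    (ι : ℕ → (S →ₗ[k] T))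
    (hinj : ∀ j, Function.Injective (ι j))
    (hdec : DirectSum.IsInternal fun j : ℕ => LinearMap.range (ι j))
    (hact : ∀ (i : ℕ) (a : R), a ∈ 𝒜 i → ∀ (j : ℕ) (x : S), a • (ι j x) = ι (i + j) (a • x)) :
    ∃ π : T →ₗ[R] S, (∀ (j : ℕ) (x : S), π (ι j x) = x) ∧
      ∀ (M : Type) [AddCommGroup M] [Module R M] [Module k M] [IsScalarTower k R M]
        (ℳ : ℕ → Submodule k M),
        DirectSum.IsInternal ℳ →
        (∀ (i : ℕ) (a : R), a ∈ 𝒜 i → ∀ (j : ℕ), ∀ x ∈ ℳ j, a • x ∈ ℳ (i + j)) →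
        ∀ ψ : M →ₗ[R] S,
          ∃! ψ' : M →ₗ[R] T,
            (∀ (j : ℕ), ∀ x ∈ ℳ j, ψ' x ∈ LinearMap.range (ι j)) ∧ ψ = π.comp ψ' := by
  classical
  let A : ℕ → Submodule k T := fun j => LinearMap.range (ι j)
  let pj : ∀ j : ℕ, A j →ₗ[k] S := fun j =>
    (LinearEquiv.ofInjective (ι j) (hinj j)).symm.toLinearMap
  let πk : T →ₗ[k] S := gradedLift A hdec pj
  have hπι : ∀ (j : ℕ) (x : S), πk (ι j x) = x := by
    intro j x
    have hx : ι j x ∈ A j := ⟨x, rfl⟩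
    rw [gradedLift_apply A hdec pj j _ hx]
    apply hinj j
    exact LinearEquiv.ofInjective_symm_apply (f := ι j) (h := hinj j) ⟨ι j x, hx⟩
  have htopT : iSup A = ⊤ := hdec.submodule_iSup_eq_top
  have hπR : ∀ (a : R) (t : T), πk (a • t) = a • πk t := by
    refine toRLinear 𝒜 A htopT πk ?_
    intro i a ha j x hx
    obtain ⟨y, rfl⟩ := hx
    rw [hact i a ha j y, hπι, hπι]
  let π : T →ₗ[R] S := { toFun := πk, map_add' := map_add πk, map_smul' := hπR }
  refine ⟨π, hπι, ?_⟩
  intro M _ _ _ _ ℳ hMdec hMact ψ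
  let fj : ∀ j : ℕ, ℳ j →ₗ[k] T := fun j =>
    (ι j).comp ((ψ.restrictScalars k).comp (ℳ j).subtype)
  let ψk : M →ₗ[k] T := gradedLift ℳ hMdec fj
  have hkey : ∀ (j : ℕ), ∀ x ∈ ℳ j, ψk x = ι j (ψ x) := fun j x hx =>
    gradedLift_apply ℳ hMdec fj j x hx
  have htopM : iSup ℳ = ⊤ := hMdec.submodule_iSup_eq_top
  have hψR : ∀ (a : R) (t : M), ψk (a • t) = a • ψk t := by
    refine toRLinear 𝒜 ℳ htopM ψk ?_
    intro i a ha j x hx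
    rw [hkey (i + j) (a • x) (hMact i a ha j x hx), hkey j x hx, hact i a ha j (ψ x),
      map_smul]
  let ψ' : M →ₗ[R] T := { toFun := ψk, map_add' := map_add ψk, map_smul' := hψR }
  have hψ'key : ∀ (j : ℕ), ∀ x ∈ ℳ j, ψ' x = ι j (ψ x) := hkey
  refine ⟨ψ', ⟨?_, ?_⟩, ?_⟩
  · intro j x hx
    exact ⟨ψ x, (hψ'key j x hx).symm⟩
  · apply LinearMap.ext; intro x
    have hx : x ∈ ⨆ j, ℳ j := htopM ▸ Submodule.mem_top
    refine Submodule.iSup_induction ℳ (motive := fun x : M => ψ x = π.comp ψ' x) hx ?_ ?_ ?_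
    · intro j x hx
      rw [LinearMap.comp_apply, hψ'key j x hx]
      exact (hπι j (ψ x)).symm
    · simp
    · intro x y hx hy
      simp only [map_add, hx, hy]
  · rintro ψ'' ⟨h1, h2⟩
    apply LinearMap.ext; intro x
    have hx : x ∈ ⨆ j, ℳ j := htopM ▸ Submodule.mem_top
    refine Submodule.iSup_induction ℳ (motive := fun x : M => ψ'' x = ψ' x) hx ?_ ?_ ?_
    · intro j x hx
      obtain ⟨y, hy⟩ := h1 j x hx
      have h3 : ψ x = y := by
        rw [h2, LinearMap.comp_apply, ← hy]
        exact hπι j y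
      rw [← hy, ← h3]
      exact (hψ'key j x hx).symm
    · simp
    · intro x y hx hy
      simp only [map_add, hx, hy]
end

section
/- Let R be a connected graded k-algebra and S a non-trivial finite-dimensional simple left R-module. For every \lambda \in k^\times, the twisted module S^\lambda (same underlying space, new action a * m = \lambda^i a.m for a \in R_i) is a quotient of S~; explicitly S~/(t - \lambda)S~ \cong S^\lambda as R-modules. -/
/-- for every `λ ∈ k^×`, the twist `S^λ` of a non-trivial finite-dimensional
simple module `S` is a quotient of its graded lift `S~` (modelled by `T` with embeddings
`ι j` and the multiplication-by-`t` map `tmap`); explicitly `S~/(t - λ)S~ ≅ S^λ`.  The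
quotient map `p : T → S` satisfies `p (ι j x) = λ^j • x`, is twisted `R`-linear
(`p (a • y) = λ^i • (a • p y)` for `a ∈ R_i`, which is exactly `R`-linearity into `S^λ`),
and its kernel is the image of `t - λ`. -/
theorem stmt3 {k R S T : Type} [Field k] [Ring R] [Algebra k R]
    (𝒜 : ℕ → Submodule k R) [GradedAlgebra 𝒜]
    (hconn : 𝒜 0 = (1 : Submodule k R))
    [AddCommGroup S] [Module R S] [Module k S] [IsScalarTower k R S]
    [IsSimpleModule R S] [FiniteDimensional k S]
    (hnt : ∃ (i : ℕ) (a : R), 0 < i ∧ a ∈ 𝒜 i ∧ ∃ x : S, a • x ≠ 0)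
    [AddCommGroup T] [Module R T] [Module k T] [IsScalarTower k R T]
    (ι : ℕ → (S →ₗ[k] T))
    (hinj : ∀ j, Function.Injective (ι j))
    (hdec : DirectSum.IsInternal fun j : ℕ => LinearMap.range (ι j))
    (hact : ∀ (i : ℕ) (a : R), a ∈ 𝒜 i → ∀ (j : ℕ) (x : S), a • (ι j x) = ι (i + j) (a • x))
    (tmap : T →ₗ[R] T)
    (htmap : ∀ (j : ℕ) (x : S), tmap (ι j x) = ι (j + 1) x) :
    ∀ lam : kˣ,
      ∃ p : T →ₗ[k] S, Function.Surjective p ∧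
        (∀ (j : ℕ) (x : S), p (ι j x) = ((lam : k) ^ j) • x) ∧
        (∀ (i : ℕ) (a : R), a ∈ 𝒜 i → ∀ y : T, p (a • y) = ((lam : k) ^ i) • (a • p y)) ∧
        LinearMap.ker p =
          LinearMap.range (tmap.restrictScalars k - (lam : k) • LinearMap.id) := by
  intro lam
  set Λ : k := (lam : k) with hΛ
  classical
  set D : T →ₗ[k] T := tmap.restrictScalars k - Λ • LinearMap.id with hD
  -- decomposition equivalence
  let e : (DirectSum ℕ fun j => LinearMap.range (ι j)) ≃ₗ[k] T :=
    LinearEquiv.ofBijective (DirectSum.coeLinearMap fun j => LinearMap.range (ι j)) hdec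
  let f : ∀ j : ℕ, S ≃ₗ[k] LinearMap.range (ι j) := fun j =>
    LinearEquiv.ofInjective (ι j) (hinj j)
  let p : T →ₗ[k] S :=
    (DirectSum.toModule k ℕ S fun j => Λ ^ j • ((f j).symm : LinearMap.range (ι j) →ₗ[k] S))
      ∘ₗ (e.symm : T →ₗ[k] _)
  have hpι : ∀ (j : ℕ) (x : S), p (ι j x) = Λ ^ j • x := by
    intro j x
    have h1 : e (DirectSum.lof k ℕ (fun j => LinearMap.range (ι j)) j ((f j) x)) = ι j x := by
      simp [e, f, DirectSum.coeLinearMap, DirectSum.toModule_lof]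
    have h2 : e.symm (ι j x) = DirectSum.lof k ℕ (fun j => LinearMap.range (ι j)) j ((f j) x) :=
      by rw [← h1, LinearEquiv.symm_apply_apply]
    simp only [p, LinearMap.comp_apply, LinearEquiv.coe_coe, h2, DirectSum.toModule_lof]
    simp
  refine ⟨p, ?_, hpι, ?_, ?_⟩
  · intro x
    exact ⟨ι 0 x, by simpa using hpι 0 x⟩
  · intro i a ha y
    have htop : (⨆ j, LinearMap.range (ι j)) = ⊤ := hdec.submodule_iSup_eq_top
    have hy : y ∈ (⨆ j, LinearMap.range (ι j)) := htop ▸ Submodule.mem_top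
    refine Submodule.iSup_induction (motive := fun y => p (a • y) = Λ ^ i • (a • p y))
      (fun j => LinearMap.range (ι j)) hy ?_ ?_ ?_
    · rintro j _ ⟨x, rfl⟩
      rw [hact i a ha j x, hpι, hpι, pow_add, mul_smul, smul_comm (Λ ^ j) a x]
    · simp
    · intro y z hy hz
      rw [smul_add, map_add, hy, hz, map_add, smul_add, smul_add]
  · have key : ∀ (j : ℕ) (x : S), ι j x - Λ ^ j • ι 0 x ∈ LinearMap.range D := by
      intro j
      induction j with
      | zero => intro x; simp
      | succ j ih =>
        intro x
        have h1 : ι (j + 1) x - Λ ^ (j + 1) • ι 0 x =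
            D (ι j x) + Λ • (ι j x - Λ ^ j • ι 0 x) := by
          simp only [hD, LinearMap.sub_apply, LinearMap.restrictScalars_apply, htmap,
            LinearMap.smul_apply, LinearMap.id_apply, smul_sub, smul_smul, pow_succ']
          abel
        rw [h1]
        exact Submodule.add_mem _ (LinearMap.mem_range_self _ _)
          (Submodule.smul_mem _ _ (ih x))
    have main : ∀ y : T, y - ι 0 (p y) ∈ LinearMap.range D := by
      intro y
      have htop : (⨆ j, LinearMap.range (ι j)) = ⊤ := hdec.submodule_iSup_eq_top
      have hy : y ∈ (⨆ j, LinearMap.range (ι j)) := htop ▸ Submodule.mem_top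
      refine Submodule.iSup_induction
        (motive := fun y => y - ι 0 (p y) ∈ LinearMap.range D)
        (fun j => LinearMap.range (ι j)) hy ?_ ?_ ?_
      · rintro j _ ⟨x, rfl⟩
        rw [hpι, map_smul]
        exact key j x
      · simp only [map_zero, sub_zero]
        exact Submodule.zero_mem _
      · intro y z hy hz
        have h2 : (y + z) - ι 0 (p (y + z)) = (y - ι 0 (p y)) + (z - ι 0 (p z)) := by
          rw [map_add, map_add]; abel
        rw [h2]
        exact Submodule.add_mem _ hy hz
    apply le_antisymm
    · intro y hy
      have hy0 : p y = 0 := hy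
      have h3 := main y
      rwa [hy0, map_zero, sub_zero] at h3
    · rintro _ ⟨y, rfl⟩
      have hty : p (tmap y) = Λ • p y := by
        have htop : (⨆ j, LinearMap.range (ι j)) = ⊤ := hdec.submodule_iSup_eq_top
        have hy : y ∈ (⨆ j, LinearMap.range (ι j)) := htop ▸ Submodule.mem_top
        refine Submodule.iSup_induction (motive := fun y => p (tmap y) = Λ • p y)
          (fun j => LinearMap.range (ι j)) hy ?_ ?_ ?_
        · rintro j _ ⟨x, rfl⟩
          rw [htmap, hpι, hpι, smul_smul, pow_succ']
        · simp
        · intro y z hy hz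
          rw [map_add, map_add, hy, hz, map_add, smul_add]
      have h4 : p (D y) = 0 := by
        simp only [hD, LinearMap.sub_apply, LinearMap.restrictScalars_apply,
          LinearMap.smul_apply, LinearMap.id_apply, map_sub, map_smul, hty, sub_self]
      exact h4
end

section
/- Let R be a connected graded k-algebra generated in degree 1, and S a 1-dimensional simple left R-module not isomorphic to the trivial module R/m. Then A := R/Ann(S~) is isomorphic as a graded k-algebra to the polynomial ring k[x] with x in degree 1, and S~ is isomorphic as a graded left R-module to R/Ann(S~). -/
open Polynomial DirectSum

section Aux

variable {k R : Type} [Field k] [Ring R] [Algebra k R]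

noncomputable def gradedToPolyAux (𝒜 : ℕ → Submodule k R) [GradedAlgebra 𝒜]
    (χ : R →ₐ[k] k) : (⨁ i, 𝒜 i) →+* Polynomial k :=
  DirectSum.toSemiring
    (fun i => ((Polynomial.monomial i).comp
        (χ.toLinearMap.comp (𝒜 i).subtype)).toAddMonoidHom)
    (by simp [SetLike.coe_gOne])
    (by
      intro i j ai aj
      simp [SetLike.coe_gMul, Polynomial.monomial_mul_monomial])

lemma gradedToPolyAux_of (𝒜 : ℕ → Submodule k R) [GradedAlgebra 𝒜]
    (χ : R →ₐ[k] k) (i : ℕ) (x : 𝒜 i) :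
    gradedToPolyAux 𝒜 χ (DirectSum.of _ i x) = Polynomial.monomial i (χ x) :=
  DirectSum.toSemiring_of _ _ _ _ _

/-- From a character `χ` and a grading, the graded map `a ↦ ∑ χ(aᵢ) Xⁱ`. -/
noncomputable def gradedToPoly (𝒜 : ℕ → Submodule k R) [GradedAlgebra 𝒜]
    (χ : R →ₐ[k] k) : R →ₐ[k] Polynomial k where
  toRingHom := (gradedToPolyAux 𝒜 χ).comp (DirectSum.decomposeAlgEquiv 𝒜).toAlgHom.toRingHom
  commutes' := by
    intro c
    have h : algebraMap k R c ∈ 𝒜 0 := SetLike.algebraMap_mem_graded 𝒜 c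
    show gradedToPolyAux 𝒜 χ ((DirectSum.decomposeAlgEquiv 𝒜) (algebraMap k R c)) = _
    rw [DirectSum.decomposeAlgEquiv_apply, DirectSum.decompose_of_mem 𝒜 h,
      gradedToPolyAux_of]
    simp [Polynomial.algebraMap_apply]

lemma gradedToPoly_of_mem (𝒜 : ℕ → Submodule k R) [GradedAlgebra 𝒜]
    (χ : R →ₐ[k] k) {i : ℕ} {a : R} (h : a ∈ 𝒜 i) :
    gradedToPoly 𝒜 χ a = Polynomial.monomial i (χ a) := by
  show gradedToPolyAux 𝒜 χ ((DirectSum.decomposeAlgEquiv 𝒜) a) = _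
  rw [DirectSum.decomposeAlgEquiv_apply, DirectSum.decompose_of_mem 𝒜 h,
    gradedToPolyAux_of]

lemma gradedToPoly_coeff (𝒜 : ℕ → Submodule k R) [GradedAlgebra 𝒜]
    (χ : R →ₐ[k] k) (a : R) (j : ℕ) :
    (gradedToPoly 𝒜 χ a).coeff j = χ (DirectSum.decompose 𝒜 a j) := by
  classical
  conv_lhs => rw [← DirectSum.sum_support_decompose 𝒜 a]
  rw [map_sum, Polynomial.finset_sum_coeff]
  rw [Finset.sum_congr rfl (fun i _ => by
    rw [gradedToPoly_of_mem 𝒜 χ (SetLike.coe_mem (DirectSum.decompose 𝒜 a i)),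
      Polynomial.coeff_monomial])]
  rw [Finset.sum_ite_eq' (DFinsupp.support (DirectSum.decompose 𝒜 a)) j]
  split_ifs with h
  · rfl
  · rw [DFinsupp.notMem_support_iff.mp h]
    simp

end Aux

set_option maxHeartbeats 1000000 in
set_option synthInstance.maxHeartbeats 400000 in
/-- if `R` is a connected graded `k`-algebra generated in degree 1 and `S` is a
1-dimensional simple left `R`-module which is non-trivial (not the trivial module `R/m`),
then `R/Ann(S~)` is isomorphic as a graded `k`-algebra to the polynomial ring `k[x]` with
`x` in degree 1 (expressed by a surjective graded algebra map `R → k[x]` whose kernel is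
the annihilator of `S~`), and `S~` is isomorphic as a graded left `R`-module to
`R/Ann(S~)` (expressed by a homogeneous degree-zero cyclic generator of `S~` whose
annihilator equals that of `S~`).  Here `S~` is modelled by `T` with embeddings `ι j`. -/
theorem stmt4 {k R S T : Type} [Field k] [Ring R] [Algebra k R]
    (𝒜 : ℕ → Submodule k R) [GradedAlgebra 𝒜]
    (hconn : 𝒜 0 = (1 : Submodule k R))
    (hgen1 : Algebra.adjoin k ((𝒜 1 : Submodule k R) : Set R) = ⊤)
    [AddCommGroup S] [Module R S] [Module k S] [IsScalarTower k R S]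
    [IsSimpleModule R S] (hdim : Module.finrank k S = 1)
    (hnt : ∃ (i : ℕ) (a : R), 0 < i ∧ a ∈ 𝒜 i ∧ ∃ x : S, a • x ≠ 0)
    [AddCommGroup T] [Module R T] [Module k T] [IsScalarTower k R T]
    (ι : ℕ → (S →ₗ[k] T))
    (hinj : ∀ j, Function.Injective (ι j))
    (hdec : DirectSum.IsInternal fun j : ℕ => LinearMap.range (ι j))
    (hact : ∀ (i : ℕ) (a : R), a ∈ 𝒜 i → ∀ (j : ℕ) (x : S), a • (ι j x) = ι (i + j) (a • x)) :
    (∃ f : R →ₐ[k] Polynomial k, Function.Surjective f ∧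
      (∀ (i : ℕ) (a : R), a ∈ 𝒜 i → f a ∈ Submodule.span k {Polynomial.X ^ i}) ∧
      (∀ a : R, f a = 0 ↔ ∀ y : T, a • y = 0)) ∧
    (∃ x0 : S, x0 ≠ 0 ∧ Submodule.span R {ι 0 x0} = ⊤ ∧
      (∀ a : R, a • (ι 0 x0) = 0 ↔ ∀ y : T, a • y = 0) ∧
      (∀ (i : ℕ) (a : R), a ∈ 𝒜 i → a • (ι 0 x0) ∈ LinearMap.range (ι i))) := by
  classical
  obtain ⟨x0, hx0, hx⟩ := finrank_eq_one_iff'.mp hdim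
  have hu : ∀ c c' : k, c • x0 = c' • x0 → c = c' := by
    intro c c' h
    by_contra hne
    have h2 : (c - c') • x0 = 0 := by rw [sub_smul, h, sub_self]
    rcases smul_eq_zero.mp h2 with h' | h'
    · exact hne (sub_eq_zero.mp h')
    · exact hx0 h'
  have hcomm : ∀ (c : k) (a : R) (x : S), a • (c • x) = c • (a • x) := by
    intro c a x
    rw [← algebraMap_smul R c x, ← mul_smul, ← Algebra.commutes, mul_smul, algebraMap_smul]
  obtain ⟨χ, hχ⟩ : ∃ χ : R →ₐ[k] k, ∀ a : R, a • x0 = χ a • x0 := by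
    set c0 : R → k := fun a => (hx (a • x0)).choose with hc0
    have hspec : ∀ a : R, c0 a • x0 = a • x0 := fun a => (hx (a • x0)).choose_spec
    have h1 : c0 1 = 1 := hu _ _ ((hspec 1).trans ((one_smul R x0).trans (one_smul k x0).symm))
    have hmul : ∀ a b : R, c0 (a * b) = c0 a * c0 b := by
      intro a b
      apply hu
      rw [hspec]
      calc (a * b) • x0 = a • (b • x0) := mul_smul a b x0
        _ = a • (c0 b • x0) := by rw [hspec]
        _ = c0 b • (a • x0) := hcomm _ _ _
        _ = c0 b • (c0 a • x0) := by rw [hspec]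
        _ = (c0 a * c0 b) • x0 := by rw [← mul_smul, mul_comm]
    have h0 : c0 0 = 0 := hu _ _ ((hspec 0).trans ((zero_smul R x0).trans (zero_smul k x0).symm))
    have hadd : ∀ a b : R, c0 (a + b) = c0 a + c0 b := by
      intro a b
      apply hu
      rw [hspec, add_smul, add_smul, hspec, hspec]
    have hcommu : ∀ c : k, c0 (algebraMap k R c) = algebraMap k k c := by
      intro c
      have hkk : algebraMap k k c = c := rfl
      rw [hkk]
      exact hu _ _ ((hspec _).trans (algebraMap_smul R c x0))
    exact ⟨⟨⟨⟨⟨c0, h1⟩, hmul⟩, h0, hadd⟩, hcommu⟩, fun a => (hspec a).symm⟩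
  have hchi : ∀ (a : R) (x : S), a • x = χ a • x := by
    intro a x
    obtain ⟨c, rfl⟩ := hx x
    rw [hcomm, hχ a, smul_smul, smul_smul, mul_comm]
  set f := gradedToPoly 𝒜 χ with hfdef
  have hfmem : ∀ (i : ℕ) (a : R), a ∈ 𝒜 i → f a = Polynomial.monomial i (χ a) :=
    fun i a h => gradedToPoly_of_mem 𝒜 χ h
  have hcoeff : ∀ (a : R) (j : ℕ), (f a).coeff j = χ (DirectSum.decompose 𝒜 a j) :=
    gradedToPoly_coeff 𝒜 χ
  have hT : ∀ (i : ℕ) (a : R), a ∈ 𝒜 i → ∀ (j : ℕ) (x : S),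
      a • (ι j x) = ι (i + j) (χ a • x) := by
    intro i a h j x
    rw [hact i a h j x, hchi]
  have hzero : ∀ (i : ℕ) (b : R), b ∈ 𝒜 i → χ b = 0 → ∀ y : T, b • y = 0 := by
    intro i b hb hχb y
    have hy : y ∈ ⨆ j, LinearMap.range (ι j) := by
      rw [hdec.submodule_iSup_eq_top]; trivial
    refine Submodule.iSup_induction (motive := fun z => b • z = 0)
      (fun j => LinearMap.range (ι j)) hy ?_ (smul_zero b) ?_
    · rintro j z ⟨x, rfl⟩
      rw [hT i b hb j x, hχb, zero_smul, map_zero]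
    · intro u v hu' hv'
      rw [smul_add, hu', hv', add_zero]
  have hall : ∀ a : R, (∀ j, χ (DirectSum.decompose 𝒜 a j) = 0) → ∀ y : T, a • y = 0 := by
    intro a h y
    conv_lhs => rw [← DirectSum.sum_support_decompose 𝒜 a]
    rw [Finset.sum_smul]
    exact Finset.sum_eq_zero fun i _ => hzero i _ (SetLike.coe_mem _) (h i) y
  have hC : ∀ a : R, a • (ι 0 x0) = 0 → ∀ j, χ (DirectSum.decompose 𝒜 a j) = 0 := by
    intro a ha j
    by_cases hj : j ∈ DFinsupp.support (DirectSum.decompose 𝒜 a)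
    · have hsum0 : (∑ i ∈ DFinsupp.support (DirectSum.decompose 𝒜 a),
          DirectSum.of (fun j => LinearMap.range (ι j)) i
            ⟨ι i (χ (DirectSum.decompose 𝒜 a i) • x0), ⟨_, rfl⟩⟩) = 0 := by
        apply hdec.injective
        rw [map_sum, map_zero]
        have : ∀ i ∈ DFinsupp.support (DirectSum.decompose 𝒜 a),
            DirectSum.coeAddMonoidHom (fun j => LinearMap.range (ι j))
              (DirectSum.of (fun j => LinearMap.range (ι j)) i
                ⟨ι i (χ (DirectSum.decompose 𝒜 a i) • x0), ⟨_, rfl⟩⟩)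
              = ι i (χ (DirectSum.decompose 𝒜 a i) • x0) :=
          fun i _ => DirectSum.coeAddMonoidHom_of _ _ _
        rw [Finset.sum_congr rfl this, ← ha]
        conv_rhs => rw [← DirectSum.sum_support_decompose 𝒜 a]
        rw [Finset.sum_smul]
        refine Finset.sum_congr rfl fun i _ => ?_
        exact (hT i _ (SetLike.coe_mem _) 0 x0).symm
      have hj0 : DirectSum.component k ℕ (fun j => ↥(LinearMap.range (ι j))) j
          (∑ i ∈ DFinsupp.support (DirectSum.decompose 𝒜 a),
            DirectSum.of (fun j => LinearMap.range (ι j)) i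
              ⟨ι i (χ (DirectSum.decompose 𝒜 a i) • x0), ⟨_, rfl⟩⟩) = 0 := by
        rw [hsum0, map_zero]
      rw [map_sum, Finset.sum_eq_single j
        (fun i _ hij => by
          rw [← DirectSum.apply_eq_component, DirectSum.of_eq_of_ne _ _ _ hij.symm])
        (fun h => absurd hj h)] at hj0
      rw [← DirectSum.apply_eq_component, DirectSum.of_eq_same] at hj0
      have h1 : ι j (χ (DirectSum.decompose 𝒜 a j) • x0) = 0 := congrArg Subtype.val hj0
      have h2 : χ (DirectSum.decompose 𝒜 a j) • x0 = 0 := by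
        apply hinj j
        rw [h1, map_zero]
      rcases smul_eq_zero.mp h2 with h' | h'
      · exact h'
      · exact absurd h' hx0
    · rw [DFinsupp.notMem_support_iff.mp hj]
      simp
  -- nontrivial character in degree 1
  obtain ⟨i0, a0, hi0, ha0, x, hax⟩ := hnt
  have hχa0 : χ a0 ≠ 0 := by
    intro h
    exact hax (by rw [hchi, h, zero_smul])
  obtain ⟨e0, he0, hne⟩ : ∃ e ∈ 𝒜 1, χ e ≠ 0 := by
    by_contra hcon
    push_neg at hcon
    have hrange : f.range ≤ ⊥ := by
      rw [← Algebra.map_top, ← hgen1, AlgHom.map_adjoin]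
      apply Algebra.adjoin_le
      rintro _ ⟨b, hb, rfl⟩
      have hb0 : f b = 0 := by
        rw [hfmem 1 b hb, hcon b hb, map_zero]
      rw [hb0]
      exact (⊥ : Subalgebra k (Polynomial k)).zero_mem
    obtain ⟨c, hc⟩ := Algebra.mem_bot.mp (hrange ⟨a0, rfl⟩)
    apply hχa0
    have hc' : (algebraMap k (Polynomial k) c) = f a0 := hc
    have h1 : (f a0).coeff i0 = 0 := by
      rw [← hc', Polynomial.algebraMap_apply]
      simp [Polynomial.coeff_C, Nat.pos_iff_ne_zero.mp hi0]
    rw [hfmem i0 a0 ha0, Polynomial.coeff_monomial, if_pos rfl] at h1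
    exact h1
  set e : R := (χ e0)⁻¹ • e0 with hedef
  have he1 : e ∈ 𝒜 1 := Submodule.smul_mem _ _ he0
  have hχe : χ e = 1 := by
    rw [hedef, map_smul, smul_eq_mul, inv_mul_cancel₀ hne]
  have hfe : f e = Polynomial.X := by
    rw [hfmem 1 e he1, hχe, Polynomial.monomial_one_one_eq_X]
  have hsurj : Function.Surjective f := by
    have hr : f.range = ⊤ := by
      rw [eq_top_iff, ← Polynomial.adjoin_X]
      apply Algebra.adjoin_le
      intro p hp
      rw [Set.mem_singleton_iff] at hp
      subst hp
      exact ⟨e, hfe⟩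
    intro p
    have : p ∈ f.range := hr ▸ Algebra.mem_top
    exact this
  have hιj : ∀ j : ℕ, ι j x0 = (e ^ j) • ι 0 x0 := by
    intro j
    have hpow : e ^ j ∈ 𝒜 j := by simpa using SetLike.pow_mem_graded j he1
    rw [hT j _ hpow 0 x0, map_pow, hχe, one_pow, one_smul, Nat.add_zero]
  have hspan : Submodule.span R {ι 0 x0} = ⊤ := by
    rw [eq_top_iff]
    intro y _
    have hy : y ∈ ⨆ j, LinearMap.range (ι j) := by
      rw [hdec.submodule_iSup_eq_top]; trivial
    refine Submodule.iSup_induction (motive := fun z => z ∈ Submodule.span R {ι 0 x0})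
      (fun j => LinearMap.range (ι j)) hy ?_ (Submodule.zero_mem _)
      (fun u v hu' hv' => Submodule.add_mem _ hu' hv')
    rintro j z ⟨x', rfl⟩
    obtain ⟨c, rfl⟩ := hx x'
    rw [map_smul, ← algebraMap_smul R c]
    apply Submodule.smul_mem
    rw [hιj j]
    exact Submodule.smul_mem _ _ (Submodule.mem_span_singleton_self _)
  refine ⟨⟨f, hsurj, ?_, ?_⟩, ⟨x0, hx0, hspan, ?_, ?_⟩⟩
  · intro i a ha
    rw [hfmem i a ha, ← Polynomial.smul_X_eq_monomial]
    exact Submodule.smul_mem _ _ (Submodule.mem_span_singleton_self _)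
  · intro a
    constructor
    · intro h y
      refine hall a (fun j => ?_) y
      rw [← hcoeff a j, h, Polynomial.coeff_zero]
    · intro h
      apply Polynomial.ext
      intro j
      rw [Polynomial.coeff_zero, hcoeff]
      exact hC a (h _) j
  · intro a
    constructor
    · intro h y
      exact hall a (hC a h) y
    · intro h
      exact h _
  · intro i a ha
    exact ⟨χ a • x0, (hT i a ha 0 x0).symm⟩
end

section
/- Let R = C\langle x, y \rangle / (x^2, xy) with x, y in degree 1, and let M = R/Rx and N = R/Ry. Then M and N are non-isomorphic point modules (each has Hilbert series (1-t)^{-1}), yet M_{\ge 1} \cong M(-1) \cong N_{\ge 1} as graded R-modules; in particular M and N become isomorphic in the quotient of graded modules by finite-dimensional ones. -/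
set_option maxHeartbeats 1000000
set_option synthInstance.maxHeartbeats 400000

/-- The defining relations `x² = 0`, `xy = 0` of the algebra `C⟨x,y⟩/(x², xy)`. -/
inductive vancliffRel : FreeAlgebra ℂ (Fin 2) → FreeAlgebra ℂ (Fin 2) → Prop
  | sq : vancliffRel (FreeAlgebra.ι ℂ 0 * FreeAlgebra.ι ℂ 0) 0
  | xy : vancliffRel (FreeAlgebra.ι ℂ 0 * FreeAlgebra.ι ℂ 1) 0

/-- The algebra `R = C⟨x,y⟩/(x², xy)`. -/
abbrev VancliffAlg : Type := RingQuot vancliffRel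

/-- The image of `x` in `R`. -/
noncomputable def vX : VancliffAlg := RingQuot.mkAlgHom ℂ vancliffRel (FreeAlgebra.ι ℂ 0)
/-- The image of `y` in `R`. -/
noncomputable def vY : VancliffAlg := RingQuot.mkAlgHom ℂ vancliffRel (FreeAlgebra.ι ℂ 1)

lemma vXX : vX * vX = 0 := by
  rw [vX, ← map_mul]
  simpa using RingQuot.mkAlgHom_rel ℂ vancliffRel.sq

lemma vXY : vX * vY = 0 := by
  rw [vX, vY, ← map_mul]
  simpa using RingQuot.mkAlgHom_rel ℂ vancliffRel.xy

/-- A subalgebra containing `vX` and `vY` is everything. -/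
lemma subalg_top (S : Subalgebra ℂ VancliffAlg) (hx : vX ∈ S) (hy : vY ∈ S) :
    ∀ r : VancliffAlg, r ∈ S := by
  intro r
  obtain ⟨a, rfl⟩ := RingQuot.mkAlgHom_surjective ℂ vancliffRel r
  induction a using FreeAlgebra.induction with
  | grade0 c => rw [AlgHom.commutes]; exact S.algebraMap_mem c
  | grade1 i =>
      fin_cases i
      · exact hx
      · exact hy
  | mul a b ha hb => rw [map_mul]; exact S.mul_mem ha hb
  | add a b ha hb => rw [map_add]; exact S.add_mem ha hb

open Polynomial

noncomputable def mulX : Module.End ℂ (Polynomial ℂ) := Algebra.lmul ℂ (Polynomial ℂ) X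

noncomputable def LxN : Module.End ℂ (Polynomial ℂ) := (Polynomial.lcoeff ℂ 0).smulRight X
noncomputable def LyN : Module.End ℂ (Polynomial ℂ) := mulX - LxN

@[simp] lemma LxN_apply (p : Polynomial ℂ) : LxN p = p.coeff 0 • X := rfl
@[simp] lemma mulX_apply (p : Polynomial ℂ) : mulX p = X * p := rfl
lemma LyN_apply (p : Polynomial ℂ) : LyN p = X * p - p.coeff 0 • X := rfl

lemma LxLx : LxN * LxN = 0 := by
  refine LinearMap.ext fun p => ?_
  rw [Module.End.mul_apply, LxN_apply, LxN_apply, coeff_smul]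
  simp

lemma LxLy : LxN * LyN = 0 := by
  refine LinearMap.ext fun p => ?_
  rw [Module.End.mul_apply, LyN_apply, LxN_apply, LinearMap.zero_apply, coeff_sub,
    mul_coeff_zero, coeff_smul, coeff_X_zero]
  simp

/-- The representation of `R` on `ℂ[X]` giving the module `M`: `x ↦ 0`, `y ↦ mulX`. -/
noncomputable def phiM : VancliffAlg →ₐ[ℂ] Module.End ℂ (Polynomial ℂ) :=
  RingQuot.liftAlgHom ℂ ⟨FreeAlgebra.lift ℂ ![0, mulX], by
    rintro x y (h | h) <;> simp [FreeAlgebra.lift_ι_apply]⟩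

/-- The representation of `R` on `ℂ[X]` giving the module `N`: `x ↦ LxN`, `y ↦ LyN`. -/
noncomputable def phiN : VancliffAlg →ₐ[ℂ] Module.End ℂ (Polynomial ℂ) :=
  RingQuot.liftAlgHom ℂ ⟨FreeAlgebra.lift ℂ ![LxN, LyN], by
    rintro x y (h | h) <;> simp [FreeAlgebra.lift_ι_apply, LxLx, LxLy]⟩
@[simp] lemma phiM_vX : phiM vX = 0 := by
  rw [vX, phiM, RingQuot.liftAlgHom_mkAlgHom_apply]; simp [FreeAlgebra.lift_ι_apply]

@[simp] lemma phiM_vY : phiM vY = mulX := by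
  rw [vY, phiM, RingQuot.liftAlgHom_mkAlgHom_apply]; simp [FreeAlgebra.lift_ι_apply]

@[simp] lemma phiN_vX : phiN vX = LxN := by
  rw [vX, phiN, RingQuot.liftAlgHom_mkAlgHom_apply]; simp [FreeAlgebra.lift_ι_apply]

@[simp] lemma phiN_vY : phiN vY = LyN := by
  rw [vY, phiN, RingQuot.liftAlgHom_mkAlgHom_apply]; simp [FreeAlgebra.lift_ι_apply]

/-- Induction principle for `VancliffAlg`. -/
lemma vanc_induction (P : VancliffAlg → Prop)
    (halg : ∀ c : ℂ, P (algebraMap ℂ VancliffAlg c)) (hx : P vX) (hy : P vY)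
    (hmul : ∀ a b, P a → P b → P (a * b)) (hadd : ∀ a b, P a → P b → P (a + b)) :
    ∀ r, P r := by
  intro r
  obtain ⟨a, rfl⟩ := RingQuot.mkAlgHom_surjective ℂ vancliffRel r
  induction a using FreeAlgebra.induction with
  | grade0 c => rw [AlgHom.commutes]; exact halg c
  | grade1 i =>
      fin_cases i
      · exact hx
      · exact hy
  | mul a b ha hb => rw [map_mul]; exact hmul _ _ ha hb
  | add a b ha hb => rw [map_add]; exact hadd _ _ ha hb

lemma mem_spanX_iff {r : VancliffAlg} : r ∈ Ideal.span {vX} ↔ ∃ s, s * vX = r := by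
  rw [← Ideal.submodule_span_eq, Submodule.mem_span_singleton]
  simp [smul_eq_mul]

lemma mem_spanY_iff {r : VancliffAlg} : r ∈ Ideal.span {vY} ↔ ∃ s, s * vY = r := by
  rw [← Ideal.submodule_span_eq, Submodule.mem_span_singleton]
  simp [smul_eq_mul]

/-- `x·r ∈ Rx` for every `r`. -/
lemma xmul_mem (r : VancliffAlg) : vX * r ∈ Ideal.span {vX} := by
  induction r using vanc_induction with
  | halg c =>
      rw [← Algebra.commutes]
      exact mem_spanX_iff.mpr ⟨algebraMap ℂ _ c, rfl⟩
  | hx => rw [vXX]; exact zero_mem _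
  | hy => rw [vXY]; exact zero_mem _
  | hmul a b ha hb =>
      obtain ⟨t, ht⟩ := mem_spanX_iff.mp ha
      obtain ⟨s, hs⟩ := mem_spanX_iff.mp hb
      refine mem_spanX_iff.mpr ⟨t * s, ?_⟩
      rw [← mul_assoc, ← ht, mul_assoc, hs, mul_assoc]
  | hadd a b ha hb => rw [mul_add]; exact add_mem ha hb

/-- `x·j = 0` for `j ∈ Ry`. -/
lemma xmul_J_eq_zero {j : VancliffAlg} (hj : j ∈ Ideal.span {vY}) : vX * j = 0 := by
  obtain ⟨s, rfl⟩ := mem_spanY_iff.mp hj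
  obtain ⟨t, ht⟩ := mem_spanX_iff.mp (xmul_mem s)
  rw [← mul_assoc, ← ht, mul_assoc, vXY, mul_zero]

/-- A `ℂ`-submodule of `R` closed under left multiplication by `x` and `y` and
containing `1` is all of `R`. -/
lemma submodule_closed_top (W : Submodule ℂ VancliffAlg)
    (hX : ∀ w ∈ W, vX * w ∈ W) (hY : ∀ w ∈ W, vY * w ∈ W) (h1 : (1 : VancliffAlg) ∈ W) :
    ∀ r : VancliffAlg, r ∈ W := by
  have key : ∀ r : VancliffAlg, ∀ w ∈ W, r * w ∈ W := by
    intro r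
    induction r using vanc_induction with
    | halg c => intro w hw; rw [← Algebra.smul_def]; exact W.smul_mem c hw
    | hx => exact hX
    | hy => exact hY
    | hmul a b ha hb => intro w hw; rw [mul_assoc]; exact ha _ (hb _ hw)
    | hadd a b ha hb => intro w hw; rw [add_mul]; exact add_mem (ha _ hw) (hb _ hw)
  intro r
  simpa using key r 1 h1

lemma xmul_pow_succ (n : ℕ) : vX * vY ^ (n + 1) = 0 := by
  rw [pow_succ', ← mul_assoc, vXY, zero_mul]

lemma xmul_aeval (p : Polynomial ℂ) :
    vX * Polynomial.aeval vY p = p.coeff 0 • vX := by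
  induction p using Polynomial.induction_on' with
  | add p q hp hq => rw [map_add, mul_add, hp, hq, coeff_add, add_smul]
  | monomial n c =>
      rw [Polynomial.aeval_monomial, Algebra.left_comm]
      cases n with
      | zero => simp [Algebra.smul_def]
      | succ n => simp [xmul_pow_succ]

/-- Canonical form in `M`: every `r` is `p(y)` modulo `Rx`. -/
lemma decM (r : VancliffAlg) :
    ∃ p : Polynomial ℂ, r - Polynomial.aeval vY p ∈ Ideal.span {vX} := by
  set U : Submodule ℂ VancliffAlg :=
    LinearMap.range (Polynomial.aeval vY).toLinearMap with hU
  set W : Submodule ℂ VancliffAlg :=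
    U ⊔ (Ideal.span {vX}).restrictScalars ℂ with hW
  have hmem : r ∈ W := by
    refine submodule_closed_top W ?_ ?_ ?_ r
    · intro w _
      exact Submodule.mem_sup_right (xmul_mem w)
    · intro w hw
      rw [hW] at hw
      rcases Submodule.mem_sup.mp hw with ⟨u, hu, i, hi, rfl⟩
      obtain ⟨p, rfl⟩ := hu
      rw [mul_add]
      refine add_mem (Submodule.mem_sup_left ⟨Polynomial.X * p, ?_⟩)
        (Submodule.mem_sup_right ?_)
      · simp
      · exact Ideal.mul_mem_left _ _ hi
    · exact Submodule.mem_sup_left ⟨1, by simp⟩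
  rcases Submodule.mem_sup.mp hmem with ⟨u, hu, i, hi, rfl⟩
  obtain ⟨p, rfl⟩ := hu
  exact ⟨p, by simpa using hi⟩

lemma phiM_I {i : VancliffAlg} (hi : i ∈ Ideal.span {vX}) : phiM i = 0 := by
  obtain ⟨s, rfl⟩ := mem_spanX_iff.mp hi
  rw [map_mul, phiM_vX, mul_zero]

lemma phiM_aeval (p : Polynomial ℂ) :
    phiM (Polynomial.aeval vY p) = Algebra.lmul ℂ (Polynomial ℂ) p := by
  rw [← Polynomial.aeval_algHom_apply, phiM_vY, mulX, Polynomial.aeval_algHom_apply,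
    Polynomial.aeval_X_left_apply]

/-- Uniqueness of the canonical form in `M`. -/
lemma aeval_mem_I {p : Polynomial ℂ} (hp : Polynomial.aeval vY p ∈ Ideal.span {vX}) :
    p = 0 := by
  have h0 := phiM_I hp
  rw [phiM_aeval] at h0
  have := LinearMap.congr_fun h0 1
  simpa using this

/-- If `r·y ∈ Rx` then `r ∈ Rx`. -/
lemma mul_vY_mem {r : VancliffAlg} (h : r * vY ∈ Ideal.span {vX}) :
    r ∈ Ideal.span {vX} := by
  obtain ⟨p, hp⟩ := decM r
  have hr : phiM r = Algebra.lmul ℂ (Polynomial ℂ) p := by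
    have : r = Polynomial.aeval vY p + (r - Polynomial.aeval vY p) := by abel
    rw [this, map_add, phiM_I hp, add_zero, phiM_aeval]
  have h0 := phiM_I h
  rw [map_mul, hr, phiM_vY] at h0
  have h1 := LinearMap.congr_fun h0 1
  have hpX : p * (Polynomial.X * 1) = 0 := by simpa using h1
  have hp0 : p = 0 := by
    simpa [mul_eq_zero, Polynomial.X_ne_zero] using hpX
  rw [hp0, map_zero, sub_zero] at hp
  exact hp

lemma phiN_J_one {j : VancliffAlg} (hj : j ∈ Ideal.span {vY}) : phiN j 1 = 0 := by
  obtain ⟨s, rfl⟩ := mem_spanY_iff.mp hj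
  rw [map_mul, phiN_vY, Module.End.mul_apply]
  have : LyN (1 : Polynomial ℂ) = 0 := by
    rw [LyN_apply]
    simp
  rw [this, map_zero]

lemma LyN_pow_X (n : ℕ) : (LyN ^ n) Polynomial.X = Polynomial.X ^ (n + 1) := by
  induction n with
  | zero => simp
  | succ n ih =>
      rw [pow_succ', Module.End.mul_apply, ih, LyN_apply]
      rw [Polynomial.coeff_X_pow]
      simp [pow_succ']

lemma aeval_LyN_X (q : Polynomial ℂ) :
    Polynomial.aeval LyN q Polynomial.X = Polynomial.X * q := by
  induction q using Polynomial.induction_on' with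
  | add p q hp hq =>
      rw [map_add, LinearMap.add_apply, hp, hq, mul_add]
  | monomial n c =>
      rw [Polynomial.aeval_monomial, Algebra.algebraMap_eq_smul_one, smul_mul_assoc,
        one_mul, LinearMap.smul_apply, LyN_pow_X]
      rw [← Polynomial.C_mul_X_pow_eq_monomial, Polynomial.smul_eq_C_mul]
      ring

/-- Canonical form in `N`: every `r` is `c + q(y)·x` modulo `Ry`. -/
lemma decN (r : VancliffAlg) :
    ∃ (c : ℂ) (q : Polynomial ℂ),
      r - (algebraMap ℂ VancliffAlg c + Polynomial.aeval vY q * vX) ∈ Ideal.span {vY} := by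
  set UX : Submodule ℂ VancliffAlg :=
    LinearMap.range ((LinearMap.mulRight ℂ vX).comp (Polynomial.aeval vY).toLinearMap) with hUX
  set W : Submodule ℂ VancliffAlg :=
    (Submodule.span ℂ {(1 : VancliffAlg)} ⊔ UX) ⊔ (Ideal.span {vY}).restrictScalars ℂ with hW
  have hmem : r ∈ W := by
    refine submodule_closed_top W ?_ ?_ ?_ r
    · intro w hw
      rw [hW] at hw
      rcases Submodule.mem_sup.mp hw with ⟨u, hu, j, hj, rfl⟩
      rcases Submodule.mem_sup.mp hu with ⟨a, ha, b, hb, rfl⟩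
      obtain ⟨c, rfl⟩ := Submodule.mem_span_singleton.mp ha
      obtain ⟨q, rfl⟩ := hb
      rw [mul_add, mul_add]
      refine add_mem (add_mem ?_ ?_) ?_
      · refine Submodule.mem_sup_left (Submodule.mem_sup_right ⟨Polynomial.C c, ?_⟩)
        simp [mul_smul_comm, smul_mul_assoc, Polynomial.aeval_C, Algebra.smul_def, Algebra.commutes]
      · have : vX * ((LinearMap.mulRight ℂ vX).comp (Polynomial.aeval vY).toLinearMap q) = 0 := by
          simp only [LinearMap.comp_apply, LinearMap.mulRight_apply, AlgHom.toLinearMap_apply]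
          rw [← mul_assoc, xmul_aeval, smul_mul_assoc, vXX, smul_zero]
        rw [this]
        exact zero_mem W
      · rw [xmul_J_eq_zero hj]
        exact zero_mem W
    · intro w hw
      rw [hW] at hw
      rcases Submodule.mem_sup.mp hw with ⟨u, hu, j, hj, rfl⟩
      rcases Submodule.mem_sup.mp hu with ⟨a, ha, b, hb, rfl⟩
      obtain ⟨c, rfl⟩ := Submodule.mem_span_singleton.mp ha
      obtain ⟨q, rfl⟩ := hb
      rw [mul_add, mul_add]
      refine add_mem (add_mem ?_ ?_) ?_
      · rw [mul_smul_comm, mul_one]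
        exact Submodule.mem_sup_right (Submodule.smul_mem _ c (Ideal.subset_span rfl))
      · refine Submodule.mem_sup_left (Submodule.mem_sup_right ⟨Polynomial.X * q, ?_⟩)
        simp only [LinearMap.comp_apply, LinearMap.mulRight_apply, AlgHom.toLinearMap_apply,
          map_mul, Polynomial.aeval_X]
        rw [mul_assoc]
      · exact Submodule.mem_sup_right (Ideal.mul_mem_left _ _ hj)
    · exact Submodule.mem_sup_left (Submodule.mem_sup_left (Submodule.mem_span_singleton_self 1))
  rcases Submodule.mem_sup.mp hmem with ⟨u, hu, j, hj, rfl⟩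
  rcases Submodule.mem_sup.mp hu with ⟨a, ha, b, hb, rfl⟩
  obtain ⟨c, rfl⟩ := Submodule.mem_span_singleton.mp ha
  obtain ⟨q, rfl⟩ := hb
  refine ⟨c, q, ?_⟩
  have h1 : c • (1:VancliffAlg) = algebraMap ℂ VancliffAlg c := (Algebra.algebraMap_eq_smul_one c).symm
  simp only [LinearMap.comp_apply, LinearMap.mulRight_apply, AlgHom.toLinearMap_apply, h1]
  simpa using hj

lemma phiN_aeval_X (q : Polynomial ℂ) :
    phiN (Polynomial.aeval vY q) Polynomial.X = Polynomial.X * q := by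
  rw [← Polynomial.aeval_algHom_apply, phiN_vY]
  exact aeval_LyN_X q

lemma phiN_I_X {i : VancliffAlg} (hi : i ∈ Ideal.span {vX}) :
    phiN i Polynomial.X = 0 := by
  obtain ⟨s, rfl⟩ := mem_spanX_iff.mp hi
  rw [map_mul, Module.End.mul_apply, phiN_vX, LxN_apply, Polynomial.coeff_X_zero,
    zero_smul, map_zero]

/-- Uniqueness of the canonical form in `N`. -/
lemma canN_zero {c : ℂ} {q : Polynomial ℂ}
    (h : algebraMap ℂ VancliffAlg c + Polynomial.aeval vY q * vX ∈ Ideal.span {vY}) :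
    c = 0 ∧ q = 0 := by
  have h0 := phiN_J_one h
  rw [map_add, LinearMap.add_apply, map_mul, Module.End.mul_apply, phiN_vX] at h0
  have hx1 : LxN (1 : Polynomial ℂ) = Polynomial.X := by
    rw [LxN_apply]; simp
  rw [hx1, phiN_aeval_X] at h0
  have halg : phiN (algebraMap ℂ VancliffAlg c) (1 : Polynomial ℂ) = Polynomial.C c := by
    rw [AlgHom.commutes]
    simp [Module.algebraMap_end_apply, Polynomial.smul_eq_C_mul]
  rw [halg] at h0
  have hc : c = 0 := by
    have := congrArg (Polynomial.coeff · 0) h0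
    simpa using this
  refine ⟨hc, ?_⟩
  rw [hc] at h0
  simp only [map_zero, zero_add] at h0
  rcases mul_eq_zero.mp h0 with h | h
  · exact absurd h Polynomial.X_ne_zero
  · exact h

/-- If `r·x ∈ Ry` then `r ∈ Rx`. -/
lemma mul_vX_mem {r : VancliffAlg} (h : r * vX ∈ Ideal.span {vY}) :
    r ∈ Ideal.span {vX} := by
  obtain ⟨p, hp⟩ := decM r
  have h0 := phiN_J_one h
  rw [map_mul, Module.End.mul_apply, phiN_vX] at h0
  have hx1 : LxN (1 : Polynomial ℂ) = Polynomial.X := by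
    rw [LxN_apply]; simp
  rw [hx1] at h0
  have hr : r = Polynomial.aeval vY p + (r - Polynomial.aeval vY p) := by abel
  rw [hr, map_add, LinearMap.add_apply, phiN_aeval_X, phiN_I_X hp, add_zero] at h0
  have hp0 : p = 0 := by
    rcases mul_eq_zero.mp h0 with h' | h'
    · exact absurd h' Polynomial.X_ne_zero
    · exact h'
  rw [hp0, map_zero, sub_zero] at hp
  exact hp

lemma vX_notMem_J : vX ∉ Ideal.span {vY} := by
  intro h
  have h0 := phiN_J_one h
  rw [phiN_vX, LxN_apply] at h0
  simp [Polynomial.X_ne_zero] at h0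

/-- The point module `M = R/Rx`. -/
abbrev VM : Type := VancliffAlg ⧸ (Ideal.span {vX} : Ideal VancliffAlg)

/-- The point module `N = R/Ry`. -/
abbrev VN : Type := VancliffAlg ⧸ (Ideal.span {vY} : Ideal VancliffAlg)

/-- The grading of `M = R/Rx`: `M_j = C·y̅ʲ`. -/
noncomputable def gradM : ℕ → Submodule ℂ VM := fun j =>
  Submodule.span ℂ {(Ideal.span {vX} : Ideal VancliffAlg).mkQ (vY ^ j)}

/-- The grading of `N = R/Ry`: `N_0 = C·1̅` and `N_{j+1} = C·(y̅ʲ x̅)`. -/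
noncomputable def gradN : ℕ → Submodule ℂ VN
  | 0 => Submodule.span ℂ {(Ideal.span {vY} : Ideal VancliffAlg).mkQ 1}
  | (j + 1) => Submodule.span ℂ {(Ideal.span {vY} : Ideal VancliffAlg).mkQ (vY ^ j * vX)}

/-- The tail `M_{≥1}` of a graded module with grading `ℳ`. -/
noncomputable def tail1 {P : Type} [AddCommGroup P] [Module VancliffAlg P] [Module ℂ P]
    (ℳ : ℕ → Submodule ℂ P) : Submodule VancliffAlg P :=
  Submodule.span VancliffAlg (⋃ j ∈ Set.Ici 1, (ℳ j : Set P))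

noncomputable def bM : ℕ → VM := fun j =>
  (Ideal.span {vX} : Ideal VancliffAlg).mkQ (vY ^ j)

noncomputable def bN : ℕ → VN
  | 0 => (Ideal.span {vY} : Ideal VancliffAlg).mkQ 1
  | (j + 1) => (Ideal.span {vY} : Ideal VancliffAlg).mkQ (vY ^ j * vX)

lemma gradM_eq (j : ℕ) : gradM j = Submodule.span ℂ {bM j} := rfl

lemma gradN_eq (j : ℕ) : gradN j = Submodule.span ℂ {bN j} := by
  cases j <;> rfl

noncomputable def rhoM : VancliffAlg →ₗ[ℂ] Polynomial ℂ where
  toFun r := phiM r 1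
  map_add' a b := by simp only [map_add, LinearMap.add_apply]
  map_smul' c a := by simp only [map_smul, LinearMap.smul_apply, RingHom.id_apply]

noncomputable def rhoN : VancliffAlg →ₗ[ℂ] Polynomial ℂ where
  toFun r := phiN r 1
  map_add' a b := by simp only [map_add, LinearMap.add_apply]
  map_smul' c a := by simp only [map_smul, LinearMap.smul_apply, RingHom.id_apply]

noncomputable def FM : VM →ₗ[ℂ] Polynomial ℂ :=
  (Submodule.liftQ ((Ideal.span {vX} : Ideal VancliffAlg).restrictScalars ℂ) rhoM
    (by
      intro i hi
      have : phiM i = 0 := phiM_I hi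
      show phiM i 1 = 0
      rw [this]; rfl)) ∘ₗ
  (Submodule.Quotient.restrictScalarsEquiv ℂ (Ideal.span {vX} : Ideal VancliffAlg)).symm.toLinearMap

noncomputable def FN : VN →ₗ[ℂ] Polynomial ℂ :=
  (Submodule.liftQ ((Ideal.span {vY} : Ideal VancliffAlg).restrictScalars ℂ) rhoN
    (by
      intro j hj
      show phiN j 1 = 0
      exact phiN_J_one hj)) ∘ₗ
  (Submodule.Quotient.restrictScalarsEquiv ℂ (Ideal.span {vY} : Ideal VancliffAlg)).symm.toLinearMap

lemma FM_mk (r : VancliffAlg) :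
    FM ((Ideal.span {vX} : Ideal VancliffAlg).mkQ r) = phiM r 1 := by
  rw [FM]
  simp only [LinearMap.comp_apply, LinearEquiv.coe_toLinearMap, Submodule.mkQ_apply,
    Submodule.Quotient.restrictScalarsEquiv_symm_mk, Submodule.liftQ_apply]
  rfl

lemma FN_mk (r : VancliffAlg) :
    FN ((Ideal.span {vY} : Ideal VancliffAlg).mkQ r) = phiN r 1 := by
  rw [FN]
  simp only [LinearMap.comp_apply, LinearEquiv.coe_toLinearMap, Submodule.mkQ_apply,
    Submodule.Quotient.restrictScalarsEquiv_symm_mk, Submodule.liftQ_apply]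
  rfl

lemma FM_bM (j : ℕ) : FM (bM j) = Polynomial.X ^ j := by
  rw [bM, FM_mk, map_pow, phiM_vY, mulX, ← map_pow]
  simp

lemma FN_bN (j : ℕ) : FN (bN j) = Polynomial.X ^ j := by
  cases j with
  | zero =>
      rw [bN, FN_mk]
      have h1 : phiN (1 : VancliffAlg) = 1 := map_one phiN
      rw [h1]
      simp
  | succ k =>
      rw [bN, FN_mk, map_mul, Module.End.mul_apply, phiN_vX, map_pow, phiN_vY]
      have hx1 : LxN (1 : Polynomial ℂ) = Polynomial.X := by rw [LxN_apply]; simp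
      rw [hx1, LyN_pow_X]

lemma xpow_li : LinearIndependent ℂ (fun j : ℕ => (Polynomial.X : Polynomial ℂ) ^ j) := by
  have := (Polynomial.basisMonomials ℂ).linearIndependent
  have heq : ⇑(Polynomial.basisMonomials ℂ) = fun j : ℕ => (Polynomial.X : Polynomial ℂ) ^ j := by
    funext j
    rw [Polynomial.coe_basisMonomials, Polynomial.X_pow_eq_monomial]
  rwa [heq] at this

lemma bM_li : LinearIndependent ℂ bM := by
  apply LinearIndependent.of_comp FM
  have : (⇑FM ∘ bM) = fun j : ℕ => (Polynomial.X : Polynomial ℂ) ^ j := funext fun j => FM_bM j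
  rw [this]
  exact xpow_li

lemma bN_li : LinearIndependent ℂ bN := by
  apply LinearIndependent.of_comp FN
  have : (⇑FN ∘ bN) = fun j : ℕ => (Polynomial.X : Polynomial ℂ) ^ j := funext fun j => FN_bN j
  rw [this]
  exact xpow_li

lemma mk_aeval_mem (p : Polynomial ℂ) :
    (Ideal.span {vX} : Ideal VancliffAlg).mkQ (Polynomial.aeval vY p) ∈
      Submodule.span ℂ (Set.range bM) := by
  induction p using Polynomial.induction_on' with
  | add p q hp hq => rw [map_add, map_add]; exact add_mem hp hq
  | monomial n c =>
      rw [Polynomial.aeval_monomial, ← Algebra.smul_def, Submodule.mkQ_apply,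
        Submodule.Quotient.mk_smul]
      exact Submodule.smul_mem _ _ (Submodule.subset_span ⟨n, rfl⟩)

lemma spanM_top : Submodule.span ℂ (Set.range bM) = ⊤ := by
  rw [eq_top_iff]
  rintro m -
  obtain ⟨r, rfl⟩ := Submodule.mkQ_surjective _ m
  obtain ⟨p, hp⟩ := decM r
  have : (Ideal.span {vX} : Ideal VancliffAlg).mkQ r
      = (Ideal.span {vX} : Ideal VancliffAlg).mkQ (Polynomial.aeval vY p) := by
    rw [← sub_eq_zero, ← map_sub, Submodule.mkQ_apply, Submodule.Quotient.mk_eq_zero]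
    exact hp
  rw [this]
  exact mk_aeval_mem p

lemma mk_aeval_mulX_mem (q : Polynomial ℂ) :
    (Ideal.span {vY} : Ideal VancliffAlg).mkQ (Polynomial.aeval vY q * vX) ∈
      Submodule.span ℂ (Set.range bN) := by
  induction q using Polynomial.induction_on' with
  | add p q hp hq => rw [map_add, add_mul, map_add]; exact add_mem hp hq
  | monomial n c =>
      rw [Polynomial.aeval_monomial, ← Algebra.smul_def, smul_mul_assoc, Submodule.mkQ_apply,
        Submodule.Quotient.mk_smul]
      exact Submodule.smul_mem _ _ (Submodule.subset_span ⟨n + 1, rfl⟩)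

lemma spanN_top : Submodule.span ℂ (Set.range bN) = ⊤ := by
  rw [eq_top_iff]
  rintro m -
  obtain ⟨r, rfl⟩ := Submodule.mkQ_surjective _ m
  obtain ⟨c, q, hq⟩ := decN r
  have : (Ideal.span {vY} : Ideal VancliffAlg).mkQ r
      = (Ideal.span {vY} : Ideal VancliffAlg).mkQ
          (algebraMap ℂ VancliffAlg c + Polynomial.aeval vY q * vX) := by
    rw [← sub_eq_zero, ← map_sub, Submodule.mkQ_apply, Submodule.Quotient.mk_eq_zero]
    exact hq
  rw [this, map_add]
  refine add_mem ?_ (mk_aeval_mulX_mem q)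
  rw [Algebra.algebraMap_eq_smul_one, Submodule.mkQ_apply, Submodule.Quotient.mk_smul]
  exact Submodule.smul_mem _ _ (Submodule.subset_span ⟨0, rfl⟩)

lemma gradM_internal : DirectSum.IsInternal gradM := by
  rw [DirectSum.isInternal_submodule_iff_iSupIndep_and_iSup_eq_top]
  constructor
  · exact bM_li.iSupIndep_span_singleton
  · rw [show (gradM : ℕ → Submodule ℂ VM) = fun j => Submodule.span ℂ {bM j} from rfl,
      ← Submodule.span_range_eq_iSup, spanM_top]

lemma gradN_internal : DirectSum.IsInternal gradN := by
  rw [DirectSum.isInternal_submodule_iff_iSupIndep_and_iSup_eq_top]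
  constructor
  · have := bN_li.iSupIndep_span_singleton
    have heq : (gradN : ℕ → Submodule ℂ VN) = fun j => Submodule.span ℂ {bN j} :=
      funext gradN_eq
    rwa [heq]
  · have heq : (gradN : ℕ → Submodule ℂ VN) = fun j => Submodule.span ℂ {bN j} :=
      funext gradN_eq
    rw [heq, ← Submodule.span_range_eq_iSup, spanN_top]

lemma gradM_rank (j : ℕ) : Module.finrank ℂ ↥(gradM j) = 1 := by
  rw [gradM_eq]
  exact finrank_span_singleton (bM_li.ne_zero j)

lemma gradN_rank (j : ℕ) : Module.finrank ℂ ↥(gradN j) = 1 := by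
  rw [gradN_eq]
  exact finrank_span_singleton (bN_li.ne_zero j)

lemma smul_mk (Iid : Ideal VancliffAlg) (r s : VancliffAlg) :
    r • Iid.mkQ s = Iid.mkQ (r * s) := by
  rw [← map_smul, smul_eq_mul]

lemma smul_csmul_mk (Iid : Ideal VancliffAlg) (r : VancliffAlg) (c : ℂ) (s : VancliffAlg) :
    r • (c • Iid.mkQ s) = c • Iid.mkQ (r * s) := by
  have h1 : c • Iid.mkQ s = Iid.mkQ (c • s) := (Submodule.Quotient.mk_smul Iid c s).symm
  rw [h1, smul_mk, mul_smul_comm]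
  exact Submodule.Quotient.mk_smul Iid c (r * s)

lemma csmul_mem_R_span {m w : VM} (c : ℂ) (hw : w ∈ Submodule.span VancliffAlg {m}) :
    c • w ∈ Submodule.span VancliffAlg {m} := by
  rw [← algebraMap_smul VancliffAlg c w]
  exact Submodule.smul_mem _ _ hw

lemma gradM0_span : Submodule.span VancliffAlg ((gradM 0 : Set VM)) = ⊤ := by
  rw [eq_top_iff]
  rintro m -
  obtain ⟨r, rfl⟩ := Submodule.mkQ_surjective _ m
  have h1 : bM 0 ∈ Submodule.span VancliffAlg ((gradM 0 : Set VM)) :=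
    Submodule.subset_span (Submodule.mem_span_singleton_self _)
  have h2 := Submodule.smul_mem _ r h1
  rwa [bM, smul_mk, pow_zero, mul_one] at h2

lemma gradN0_span : Submodule.span VancliffAlg ((gradN 0 : Set VN)) = ⊤ := by
  rw [eq_top_iff]
  rintro m -
  obtain ⟨r, rfl⟩ := Submodule.mkQ_surjective _ m
  have h1 : bN 0 ∈ Submodule.span VancliffAlg ((gradN 0 : Set VN)) :=
    Submodule.subset_span (Submodule.mem_span_singleton_self _)
  have h2 := Submodule.smul_mem _ r h1
  rwa [bN, smul_mk, mul_one] at h2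

lemma gradM_shift (j : ℕ) : ∀ v ∈ gradM j, vX • v ∈ gradM (j + 1) ∧ vY • v ∈ gradM (j + 1) := by
  intro v hv
  rw [gradM_eq] at hv
  obtain ⟨c, rfl⟩ := Submodule.mem_span_singleton.mp hv
  constructor
  · rw [bM, smul_csmul_mk]
    have : (Ideal.span {vX} : Ideal VancliffAlg).mkQ (vX * vY ^ j) = 0 := by
      rw [Submodule.mkQ_apply, Submodule.Quotient.mk_eq_zero]
      exact xmul_mem _
    rw [this]
    have h0 : c • (0 : VM) = 0 := by
      have := Submodule.Quotient.mk_smul (Ideal.span {vX} : Ideal VancliffAlg) c (0 : VancliffAlg)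
      simpa using this.symm
    rw [h0]
    exact zero_mem _
  · rw [bM, smul_csmul_mk, ← pow_succ']
    exact Submodule.smul_mem _ _ (Submodule.subset_span rfl)

lemma gradN_shift (j : ℕ) : ∀ v ∈ gradN j, vX • v ∈ gradN (j + 1) ∧ vY • v ∈ gradN (j + 1) := by
  intro v hv
  rw [gradN_eq] at hv
  obtain ⟨c, rfl⟩ := Submodule.mem_span_singleton.mp hv
  cases j with
  | zero =>
      constructor
      · rw [bN, smul_csmul_mk, mul_one]
        refine Submodule.smul_mem _ _ (Submodule.subset_span ?_)
        show (Ideal.span {vY} : Ideal VancliffAlg).mkQ vX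
          ∈ {(Ideal.span {vY} : Ideal VancliffAlg).mkQ (vY ^ 0 * vX)}
        rw [pow_zero, one_mul]
        rfl
      · rw [bN, smul_csmul_mk, mul_one]
        have : (Ideal.span {vY} : Ideal VancliffAlg).mkQ vY = 0 := by
          rw [Submodule.mkQ_apply, Submodule.Quotient.mk_eq_zero]
          exact Ideal.subset_span rfl
        rw [this]
        have h0 : c • (0 : VN) = 0 := by
          have := Submodule.Quotient.mk_smul (Ideal.span {vY} : Ideal VancliffAlg) c (0 : VancliffAlg)
          simpa using this.symm
        rw [h0]
        exact zero_mem _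
  | succ k =>
      constructor
      · rw [bN, smul_csmul_mk, ← mul_assoc]
        have hxk : vX * vY ^ k * vX = 0 := by
          cases k with
          | zero => rw [pow_zero, mul_one, vXX]
          | succ l => rw [xmul_pow_succ, zero_mul]
        rw [hxk]
        have : (Ideal.span {vY} : Ideal VancliffAlg).mkQ 0 = 0 := map_zero _
        rw [this]
        have h0 : c • (0 : VN) = 0 := by
          have := Submodule.Quotient.mk_smul (Ideal.span {vY} : Ideal VancliffAlg) c (0 : VancliffAlg)
          simpa using this.symm
        rw [h0]
        exact zero_mem _
      · rw [bN, smul_csmul_mk, ← mul_assoc, ← pow_succ']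
        exact Submodule.smul_mem _ _ (Submodule.subset_span rfl)

lemma vX_smul_VM (m : VM) : vX • m = 0 := by
  obtain ⟨r, rfl⟩ := Submodule.mkQ_surjective _ m
  rw [smul_mk, Submodule.mkQ_apply, Submodule.Quotient.mk_eq_zero]
  exact xmul_mem r

lemma no_iso : ¬ Nonempty (VM ≃ₗ[VancliffAlg] VN) := by
  rintro ⟨e⟩
  have h1 : vX • bN 0 = 0 := by
    have := congrArg e (vX_smul_VM (e.symm (bN 0)))
    rwa [map_smul, e.apply_symm_apply, map_zero] at this
  rw [bN, smul_mk, mul_one, Submodule.mkQ_apply, Submodule.Quotient.mk_eq_zero] at h1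
  exact vX_notMem_J h1

lemma bM_succ_smul (k : ℕ) : vY ^ k • bM 1 = bM (k + 1) := by
  rw [bM, bM, smul_mk, pow_one, ← pow_succ]

lemma bN_succ_smul (k : ℕ) : vY ^ k • bN 1 = bN (k + 1) := by
  rw [bN, bN, smul_mk, pow_zero, one_mul]

lemma tail1M_eq : tail1 gradM = Submodule.span VancliffAlg {bM 1} := by
  refine le_antisymm (Submodule.span_le.mpr ?_) (Submodule.span_le.mpr ?_)
  · rintro x hx
    simp only [Set.mem_iUnion, Set.mem_Ici] at hx
    obtain ⟨j, hj, hxj⟩ := hx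
    obtain ⟨k, rfl⟩ := Nat.exists_eq_add_of_le hj
    rw [show 1 + k = k + 1 by omega] at hxj
    have hxj' : x ∈ gradM (k + 1) := hxj
    rw [gradM_eq] at hxj'
    obtain ⟨c, rfl⟩ := Submodule.mem_span_singleton.mp hxj'
    rw [← bM_succ_smul k]
    exact csmul_mem_R_span c
      (Submodule.smul_mem _ _ (Submodule.mem_span_singleton_self _))
  · rintro x rfl
    apply Submodule.subset_span
    simp only [Set.mem_iUnion, Set.mem_Ici]
    exact ⟨1, le_refl 1, Submodule.mem_span_singleton_self _⟩

lemma csmul_mem_R_spanN {m w : VN} (c : ℂ) (hw : w ∈ Submodule.span VancliffAlg {m}) :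
    c • w ∈ Submodule.span VancliffAlg {m} := by
  rw [← algebraMap_smul VancliffAlg c w]
  exact Submodule.smul_mem _ _ hw

lemma tail1N_eq : tail1 gradN = Submodule.span VancliffAlg {bN 1} := by
  refine le_antisymm (Submodule.span_le.mpr ?_) (Submodule.span_le.mpr ?_)
  · rintro x hx
    simp only [Set.mem_iUnion, Set.mem_Ici] at hx
    obtain ⟨j, hj, hxj⟩ := hx
    obtain ⟨k, rfl⟩ := Nat.exists_eq_add_of_le hj
    rw [show 1 + k = k + 1 by omega] at hxj
    have hxj' : x ∈ gradN (k + 1) := hxj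
    rw [gradN_eq] at hxj'
    obtain ⟨c, rfl⟩ := Submodule.mem_span_singleton.mp hxj'
    rw [← bN_succ_smul k]
    exact csmul_mem_R_spanN c
      (Submodule.smul_mem _ _ (Submodule.mem_span_singleton_self _))
  · rintro x rfl
    apply Submodule.subset_span
    simp only [Set.mem_iUnion, Set.mem_Ici]
    refine ⟨1, le_refl 1, ?_⟩
    rw [gradN_eq]
    exact Submodule.mem_span_singleton_self _

noncomputable def gM : ↥(tail1 gradM) := ⟨bM 1, by
  rw [tail1M_eq]; exact Submodule.mem_span_singleton_self _⟩

noncomputable def gN : ↥(tail1 gradN) := ⟨bN 1, by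
  rw [tail1N_eq]; exact Submodule.mem_span_singleton_self _⟩

noncomputable def psiM : VM →ₗ[VancliffAlg] ↥(tail1 gradM) :=
  Submodule.liftQ (Ideal.span {vX}) (LinearMap.toSpanSingleton VancliffAlg _ gM)
    (by
      rw [Ideal.span_le]
      rintro x rfl
      show vX • gM = 0
      refine Subtype.ext ?_
      show vX • bM 1 = 0
      rw [bM, smul_mk, pow_one, vXY, map_zero])

noncomputable def psiN : VM →ₗ[VancliffAlg] ↥(tail1 gradN) :=
  Submodule.liftQ (Ideal.span {vX}) (LinearMap.toSpanSingleton VancliffAlg _ gN)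
    (by
      rw [Ideal.span_le]
      rintro x rfl
      show vX • gN = 0
      refine Subtype.ext ?_
      show vX • bN 1 = 0
      rw [bN, smul_mk, pow_zero, one_mul, vXX, map_zero])

lemma psiM_mk (r : VancliffAlg) :
    psiM ((Ideal.span {vX} : Ideal VancliffAlg).mkQ r) = r • gM := by
  rw [psiM, Submodule.mkQ_apply, Submodule.liftQ_apply, LinearMap.toSpanSingleton_apply]

lemma psiN_mk (r : VancliffAlg) :
    psiN ((Ideal.span {vX} : Ideal VancliffAlg).mkQ r) = r • gN := by
  rw [psiN, Submodule.mkQ_apply, Submodule.liftQ_apply, LinearMap.toSpanSingleton_apply]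

lemma psiM_bij : Function.Bijective psiM := by
  constructor
  · rw [← LinearMap.ker_eq_bot, eq_bot_iff]
    intro m hm
    obtain ⟨r, rfl⟩ := Submodule.mkQ_surjective _ m
    rw [LinearMap.mem_ker, psiM_mk] at hm
    have hval : r • bM 1 = (0 : VM) := congrArg Subtype.val hm
    rw [bM, smul_mk, pow_one, Submodule.mkQ_apply, Submodule.Quotient.mk_eq_zero] at hval
    rw [Submodule.mem_bot, Submodule.mkQ_apply, Submodule.Quotient.mk_eq_zero]
    exact mul_vY_mem hval
  · intro t
    have ht : (t : VM) ∈ Submodule.span VancliffAlg {bM 1} := by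
      rw [← tail1M_eq]; exact t.2
    obtain ⟨r, hr⟩ := Submodule.mem_span_singleton.mp ht
    refine ⟨(Ideal.span {vX} : Ideal VancliffAlg).mkQ r, ?_⟩
    rw [psiM_mk]
    exact Subtype.ext hr

lemma psiN_bij : Function.Bijective psiN := by
  constructor
  · rw [← LinearMap.ker_eq_bot, eq_bot_iff]
    intro m hm
    obtain ⟨r, rfl⟩ := Submodule.mkQ_surjective _ m
    rw [LinearMap.mem_ker, psiN_mk] at hm
    have hval : r • bN 1 = (0 : VN) := congrArg Subtype.val hm
    rw [bN, smul_mk, pow_zero, one_mul, Submodule.mkQ_apply,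
      Submodule.Quotient.mk_eq_zero] at hval
    rw [Submodule.mem_bot, Submodule.mkQ_apply, Submodule.Quotient.mk_eq_zero]
    exact mul_vX_mem hval
  · intro t
    have ht : (t : VN) ∈ Submodule.span VancliffAlg {bN 1} := by
      rw [← tail1N_eq]; exact t.2
    obtain ⟨r, hr⟩ := Submodule.mem_span_singleton.mp ht
    refine ⟨(Ideal.span {vX} : Ideal VancliffAlg).mkQ r, ?_⟩
    rw [psiN_mk]
    exact Subtype.ext hr

noncomputable def eqM : ↥(tail1 gradM) ≃ₗ[VancliffAlg] VM :=
  (LinearEquiv.ofBijective psiM psiM_bij).symm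

noncomputable def eqN : ↥(tail1 gradN) ≃ₗ[VancliffAlg] VM :=
  (LinearEquiv.ofBijective psiN psiN_bij).symm

lemma eqM_grading : ∀ j : ℕ, 1 ≤ j → ∀ v : ↥(tail1 gradM),
    (v : VM) ∈ gradM j → eqM v ∈ gradM (j - 1) := by
  intro j hj v hv
  cases j with
  | zero => omega
  | succ k =>
      rw [gradM_eq] at hv
      obtain ⟨c, hc⟩ := Submodule.mem_span_singleton.mp hv
      have key : psiM (c • bM k) = v := by
        have h1 : c • bM k = (Ideal.span {vX} : Ideal VancliffAlg).mkQ (c • vY ^ k) := by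
          rw [bM, Submodule.mkQ_apply, Submodule.mkQ_apply, Submodule.Quotient.mk_smul]
        rw [h1, psiM_mk]
        apply Subtype.ext
        show (c • vY ^ k) • bM 1 = (v : VM)
        rw [smul_assoc, bM_succ_smul]
        exact hc
      have : eqM v = c • bM k := by
        rw [eqM, LinearEquiv.symm_apply_eq, LinearEquiv.ofBijective_apply, key]
      rw [this, Nat.add_sub_cancel, gradM_eq]
      exact Submodule.smul_mem _ _ (Submodule.mem_span_singleton_self _)

lemma eqN_grading : ∀ j : ℕ, 1 ≤ j → ∀ v : ↥(tail1 gradN),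
    (v : VN) ∈ gradN j → eqN v ∈ gradM (j - 1) := by
  intro j hj v hv
  cases j with
  | zero => omega
  | succ k =>
      rw [gradN_eq] at hv
      obtain ⟨c, hc⟩ := Submodule.mem_span_singleton.mp hv
      have key : psiN (c • bM k) = v := by
        have h1 : c • bM k = (Ideal.span {vX} : Ideal VancliffAlg).mkQ (c • vY ^ k) := by
          rw [bM, Submodule.mkQ_apply, Submodule.mkQ_apply, Submodule.Quotient.mk_smul]
        rw [h1, psiN_mk]
        apply Subtype.ext
        show (c • vY ^ k) • bN 1 = (v : VN)
        rw [smul_assoc, bN_succ_smul]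
        exact hc
      have : eqN v = c • bM k := by
        rw [eqN, LinearEquiv.symm_apply_eq, LinearEquiv.ofBijective_apply, key]
      rw [this, Nat.add_sub_cancel, gradM_eq]
      exact Submodule.smul_mem _ _ (Submodule.mem_span_singleton_self _)

/-- `M = R/Rx` and `N = R/Ry` are non-isomorphic point modules over
`R = C⟨x,y⟩/(x², xy)` (each with Hilbert series `(1-t)^{-1}`), yet
`M_{≥1} ≅ M(-1) ≅ N_{≥1}` as graded `R`-modules. -/
theorem stmt9 :
    (DirectSum.IsInternal gradM ∧ (∀ j, Module.finrank ℂ ↥(gradM j) = 1) ∧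
      Submodule.span VancliffAlg ((gradM 0 : Set VM)) = ⊤ ∧
      (∀ j, ∀ v ∈ gradM j, vX • v ∈ gradM (j + 1) ∧ vY • v ∈ gradM (j + 1))) ∧
    (DirectSum.IsInternal gradN ∧ (∀ j, Module.finrank ℂ ↥(gradN j) = 1) ∧
      Submodule.span VancliffAlg ((gradN 0 : Set VN)) = ⊤ ∧
      (∀ j, ∀ v ∈ gradN j, vX • v ∈ gradN (j + 1) ∧ vY • v ∈ gradN (j + 1))) ∧
    (¬ Nonempty (VM ≃ₗ[VancliffAlg] VN)) ∧
    (∃ f : ↥(tail1 gradM) ≃ₗ[VancliffAlg] VM,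
      ∀ j : ℕ, 1 ≤ j → ∀ v : ↥(tail1 gradM), (v : VM) ∈ gradM j → f v ∈ gradM (j - 1)) ∧
    (∃ g : ↥(tail1 gradN) ≃ₗ[VancliffAlg] VM,
      ∀ j : ℕ, 1 ≤ j → ∀ v : ↥(tail1 gradN), (v : VN) ∈ gradN j → g v ∈ gradM (j - 1)) := by
  exact ⟨⟨gradM_internal, gradM_rank, gradM0_span, gradM_shift⟩,
    ⟨gradN_internal, gradN_rank, gradN0_span, gradN_shift⟩,
    no_iso, ⟨eqM, eqM_grading⟩, ⟨eqN, eqN_grading⟩⟩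
end
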